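/- Every graph of adjacency dimension k has order at most k + 2^k, and this bound is attained for every k ≥ 1. -/

import Mathlib

open SimpleGraph Finset

variable {V : Type*}

/-- truncated distance `d_k(x,y) = min(d(x,y), k+1)` with `d = ∞` across components. -/
noncomputable def truncDist (G : SimpleGraph V) (k : ℕ) (x y : V) : ℕ∞ :=
  min (G.edist x y) (k + 1)

/-- `f` is a resolving broadcast of `G`. -/
def IsResolvingBroadcast (G : SimpleGraph V) (f : V → ℕ) : Prop :=
  ∀ x y : V, x ≠ y → ∃ z : V, 0 < f z ∧ truncDist G (f z) x z ≠ truncDist G (f z) y z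

/-- broadcast dimension -/
noncomputable def bdim (G : SimpleGraph V) [Fintype V] : ℕ :=
  sInf {c : ℕ | ∃ f : V → ℕ, IsResolvingBroadcast G f ∧ ∑ v, f v = c}

/-- adjacency resolving set -/
def IsAdjResolvingSet (G : SimpleGraph V) (S : Set V) : Prop :=
  ∀ x y : V, x ≠ y → ∃ z ∈ S, truncDist G 1 x z ≠ truncDist G 1 y z

/-- adjacency dimension -/
noncomputable def adim (G : SimpleGraph V) [Fintype V] : ℕ :=
  sInf {n : ℕ | ∃ S : Finset V, IsAdjResolvingSet G ↑S ∧ S.card = n}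

/-- resolving set (metric dimension) -/
def IsResolvingSet (G : SimpleGraph V) (S : Set V) : Prop :=
  ∀ x y : V, x ≠ y → ∃ z ∈ S, G.edist x z ≠ G.edist y z

/-- metric dimension -/
noncomputable def mdim (G : SimpleGraph V) [Fintype V] : ℕ :=
  sInf {n : ℕ | ∃ S : Finset V, IsResolvingSet G ↑S ∧ S.card = n}

open Classical in
lemma truncDist_one_eq (G : SimpleGraph V) (x z : V) :
    truncDist G 1 x z = if x = z then 0 else if G.Adj x z then 1 else 2 := by
  unfold truncDist
  split_ifs with h1 h2
  · subst h1; simp [edist_self]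
  · rw [edist_eq_one_iff_adj.mpr h2]
    norm_num
  · have h0 : G.edist x z ≠ 0 := edist_eq_zero_iff.ne.mpr h1
    have hne1 : G.edist x z ≠ 1 := fun h => h2 (edist_eq_one_iff_adj.mp h)
    have : (2 : ℕ∞) ≤ G.edist x z := by
      have : 1 < G.edist x z :=
        lt_of_le_of_ne (ENat.one_le_iff_ne_zero.mpr h0) (Ne.symm hne1)
      exact Order.add_one_le_of_lt this
    have h2' : ((1:ℕ) : ℕ∞) + 1 = 2 := by norm_num
    rw [h2', min_eq_right this]

lemma truncDist_eq_one_of_adj (G : SimpleGraph V) {x z : V} (h : G.Adj x z) :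
    truncDist G 1 x z = 1 := by
  classical
  rw [truncDist_one_eq, if_neg h.ne, if_pos h]

lemma truncDist_eq_two (G : SimpleGraph V) {x z : V} (h1 : x ≠ z) (h2 : ¬ G.Adj x z) :
    truncDist G 1 x z = 2 := by
  classical
  rw [truncDist_one_eq, if_neg h1, if_neg h2]

lemma truncDist_ne_zero (G : SimpleGraph V) {x z : V} (h : x ≠ z) :
    truncDist G 1 x z ≠ 0 := by
  classical
  rw [truncDist_one_eq, if_neg h]
  split_ifs <;> simp

lemma univ_adjResolving (G : SimpleGraph V) [Fintype V] :
    IsAdjResolvingSet G (↑(Finset.univ : Finset V)) := by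
  intro x y hxy
  refine ⟨x, by simp, ?_⟩
  rw [truncDist_one_eq, if_pos rfl]
  exact (truncDist_ne_zero G hxy.symm).symm

lemma adim_spec (G : SimpleGraph V) [Fintype V] :
    ∃ S : Finset V, IsAdjResolvingSet G ↑S ∧ S.card = adim G :=
  Nat.sInf_mem (⟨_, Finset.univ, univ_adjResolving G, rfl⟩ :
    Set.Nonempty {n : ℕ | ∃ S : Finset V, IsAdjResolvingSet G ↑S ∧ S.card = n})

open Classical in
lemma card_le_of_adjResolving (G : SimpleGraph V) [Fintype V] (S : Finset V)
    (h : IsAdjResolvingSet G ↑S) : Fintype.card V ≤ S.card + 2 ^ S.card := by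
  classical
  have hcompl : (Sᶜ : Finset V).card ≤ 2 ^ S.card := by
    have hinj : Function.Injective
        (fun v : (Sᶜ : Finset V) => (fun z : S => G.Adj v.1 z.1) : _ → (S → Prop)) := by
      rintro ⟨v, hv⟩ ⟨w, hw⟩ hvw
      simp only [Finset.mem_compl] at hv hw
      by_contra hne
      have hne' : v ≠ w := by simpa using hne
      obtain ⟨z, hz, hd⟩ := h v w hne'
      have hvz : v ≠ z := fun e => hv (e ▸ hz)
      have hwz : w ≠ z := fun e => hw (e ▸ hz)
      have := congrFun hvw ⟨z, hz⟩
      simp only at this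
      rw [truncDist_one_eq, truncDist_one_eq, if_neg hvz, if_neg hwz, this] at hd
      exact hd rfl
    calc (Sᶜ : Finset V).card = Fintype.card (Sᶜ : Finset V) := (Fintype.card_coe _).symm
      _ ≤ Fintype.card (S → Prop) := Fintype.card_le_of_injective _ hinj
      _ = 2 ^ S.card := by simp [Fintype.card_fun]
  have : S.card + (Sᶜ : Finset V).card = Fintype.card V := by
    rw [Finset.card_add_card_compl]
  omega

/-- the extremal graph: `i : Fin k` is adjacent to `f : Fin k → Bool` iff `f i = true`. -/
def exGraph (k : ℕ) : SimpleGraph (Fin k ⊕ (Fin k → Bool)) where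
  Adj x y := match x, y with
    | .inl i, .inr f => f i = true
    | .inr f, .inl i => f i = true
    | _, _ => False
  symm := ⟨by rintro (i | f) (j | g) h <;> simp_all⟩
  loopless := ⟨by rintro (i | f) h <;> simp_all⟩

lemma exGraph_adim_le (k : ℕ) : adim (exGraph k) ≤ k := by
  classical
  apply Nat.sInf_le
  refine ⟨Finset.univ.image Sum.inl, ?_, ?_⟩
  · rintro (i | f) (j | g) hxy
    · exact ⟨.inl i, by simp, by
        rw [truncDist_one_eq, if_pos rfl]
        exact (truncDist_ne_zero _ hxy.symm).symm⟩
    · exact ⟨.inl i, by simp, by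
        rw [truncDist_one_eq, if_pos rfl]
        exact (truncDist_ne_zero _ Sum.inr_ne_inl).symm⟩
    · exact ⟨.inl j, by simp, by
        rw [truncDist_one_eq (x := (Sum.inl j : Fin k ⊕ (Fin k → Bool))), if_pos rfl]
        exact truncDist_ne_zero _ Sum.inr_ne_inl⟩
    · have hfg : f ≠ g := by simpa using hxy
      obtain ⟨i, hi⟩ := Function.ne_iff.mp hfg
      refine ⟨.inl i, by simp, ?_⟩
      have hadj1 : (exGraph k).Adj (.inr f) (.inl i) ↔ f i = true := Iff.rfl
      have hadj2 : (exGraph k).Adj (.inr g) (.inl i) ↔ g i = true := Iff.rfl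
      rcases Bool.eq_false_or_eq_true (f i) with hf | hf <;>
        rcases Bool.eq_false_or_eq_true (g i) with hg | hg
      · exact absurd (hf.trans hg.symm) hi
      · rw [truncDist_eq_one_of_adj _ (hadj1.mpr hf),
          truncDist_eq_two _ Sum.inr_ne_inl (by simp [hadj2, hg])]
        norm_num
      · rw [truncDist_eq_two _ Sum.inr_ne_inl (by simp [hadj1, hf]),
          truncDist_eq_one_of_adj _ (hadj2.mpr hg)]
        norm_num
      · exact absurd (hf.trans hg.symm) hi
  · rw [Finset.card_image_of_injective _ Sum.inl_injective, Finset.card_univ,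
      Fintype.card_fin]

theorem stmt_6 (k : ℕ) (hk : 1 ≤ k) :
    (∀ (V : Type) (_ : Fintype V) (_ : DecidableEq V) (G : SimpleGraph V),
      adim G = k → Fintype.card V ≤ k + 2 ^ k) ∧
    ∃ (V : Type) (_ : Fintype V) (_ : DecidableEq V) (G : SimpleGraph V),
      adim G = k ∧ Fintype.card V = k + 2 ^ k := by
  constructor
  · intro V _ _ G hG
    obtain ⟨S, hS, hScard⟩ := adim_spec G
    have := card_le_of_adjResolving G S hS
    rw [hScard, hG] at this
    exact this
  · refine ⟨Fin k ⊕ (Fin k → Bool), inferInstance, inferInstance, exGraph k, ?_, by simp⟩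
    have hle := exGraph_adim_le k
    have hcard : Fintype.card (Fin k ⊕ (Fin k → Bool)) = k + 2 ^ k := by simp
    have hge : k ≤ adim (exGraph k) := by
      by_contra hlt
      push_neg at hlt
      obtain ⟨S, hS, hScard⟩ := adim_spec (exGraph k)
      have h1 := card_le_of_adjResolving (exGraph k) S hS
      rw [hScard, hcard] at h1
      have h2 : adim (exGraph k) + 2 ^ adim (exGraph k) < k + 2 ^ k :=
        Nat.add_lt_add hlt (Nat.pow_lt_pow_right one_lt_two hlt)
      omega
    omega
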